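/- Let a, b ≥ 1 and let ρ be a positive semidefinite matrix on ℂ^a ⊗ ℂ^b. Then ρ ≤ a · (I_a ⊗ Tr_A(ρ)) in the Loewner order, where Tr_A denotes the partial trace over the first tensor factor and I_a is the identity on ℂ^a. -/

import Mathlib

open Matrix MeasureTheory
open scoped Kronecker ComplexOrder

noncomputable section

/-- The positive semidefinite square root of a matrix (junk value `0` if not PSD). -/
def matSqrt {ι : Type*} [Fintype ι] [DecidableEq ι] (A : Matrix ι ι ℂ) : Matrix ι ι ℂ :=
  open Classical in if h : A.PosSemidef then
    h.1.eigenvectorUnitary.1 * diagonal ((↑) ∘ (√·) ∘ h.1.eigenvalues) *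
      (star h.1.eigenvectorUnitary : Matrix ι ι ℂ) else 0

/-- The matrix absolute value `|X| = √(XᴴX)`. -/
def matAbs {ι : Type*} [Fintype ι] [DecidableEq ι] (X : Matrix ι ι ℂ) : Matrix ι ι ℂ :=
  matSqrt (Xᴴ * X)

/-- Uhlmann fidelity `F(ρ,σ) = (Tr|√ρ√σ|)²`. -/
def fid {ι : Type*} [Fintype ι] [DecidableEq ι] (ρ σ : Matrix ι ι ℂ) : ℝ :=
  ((matAbs (matSqrt ρ * matSqrt σ)).trace).re ^ 2

/-- A density matrix: positive semidefinite with unit trace. -/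
def IsDensity {ι : Type*} [Fintype ι] [DecidableEq ι] (ρ : Matrix ι ι ℂ) : Prop :=
  ρ.PosSemidef ∧ ρ.trace = 1

/-- The rank-one projector `|ψ⟩⟨ψ|`. -/
def ketbra {ι : Type*} (ψ : ι → ℂ) : Matrix ι ι ℂ := Matrix.vecMulVec ψ (star ψ)

/-- The `l`-fold tensor power of a matrix on `ℂ^d`, acting on `(ℂ^d)^{⊗l}`. -/
def tpow {d : ℕ} (M : Matrix (Fin d) (Fin d) ℂ) (l : ℕ) :
    Matrix (Fin l → Fin d) (Fin l → Fin d) ℂ :=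
  Matrix.of fun f g => ∏ i, M (f i) (g i)

/-- Loewner order: `A ⪯ B` iff `B - A` is positive semidefinite. -/
def loewnerLE {ι : Type*} [Fintype ι] (A B : Matrix ι ι ℂ) : Prop := (B - A).PosSemidef

/-- Projector onto the symmetric subspace of `(ℂ^d)^{⊗l}`:
`(1/l!) Σ_{π ∈ S_l} U_π` where `U_π` permutes the tensor factors. -/
def symProj (d l : ℕ) : Matrix (Fin l → Fin d) (Fin l → Fin d) ℂ :=
  (l.factorial : ℂ)⁻¹ •
    ∑ π : Equiv.Perm (Fin l), Matrix.of fun f g => if f = (fun i => g (π i)) then (1 : ℂ) else 0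


/-- Partial trace over the first tensor factor. -/
def ptraceA {a b : ℕ} (ρ : Matrix (Fin a × Fin b) (Fin a × Fin b) ℂ) :
    Matrix (Fin b) (Fin b) ℂ :=
  Matrix.of fun j j' => ∑ i, ρ (i, j) (i, j')

lemma key_cs {m κ : Type*} [Fintype m] [Fintype κ] (v : m → κ → ℂ) :
    0 ≤ (Fintype.card m : ℂ) * (∑ i, dotProduct (star (v i)) (v i)) -
        ∑ i, ∑ i', dotProduct (star (v i)) (v i') := by
  have h1 : ∀ i i' : m, dotProduct (star (v i - v i')) (v i - v i') =
      dotProduct (star (v i)) (v i) + dotProduct (star (v i')) (v i')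
        - dotProduct (star (v i)) (v i') - dotProduct (star (v i')) (v i) := by
    intro i i'
    simp only [star_sub, sub_dotProduct, dotProduct_sub]
    ring
  have h2 : (∑ i : m, ∑ i' : m, dotProduct (star (v i')) (v i)) =
      ∑ i : m, ∑ i' : m, dotProduct (star (v i)) (v i') := by rw [Finset.sum_comm]
  have hexp : ∑ i, ∑ i', dotProduct (star (v i - v i')) (v i - v i') =
      2 * ((Fintype.card m : ℂ) * (∑ i, dotProduct (star (v i)) (v i)) -
        ∑ i, ∑ i', dotProduct (star (v i)) (v i')) := by
    simp only [h1, Finset.sum_sub_distrib, Finset.sum_add_distrib, Finset.sum_const,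
      Finset.card_univ, nsmul_eq_mul, ← Finset.mul_sum, h2]
    ring
  have hpos : 0 ≤ ∑ i, ∑ i', dotProduct (star (v i - v i')) (v i - v i') :=
    Finset.sum_nonneg fun i _ => Finset.sum_nonneg fun i' _ =>
      dotProduct_star_self_nonneg _
  rw [hexp] at hpos
  have h3 : (0:ℂ) ≤ 2⁻¹ := by rw [Complex.nonneg_iff]; norm_num
  calc (0:ℂ) ≤ 2⁻¹ * (2 * _) := mul_nonneg h3 hpos
    _ = _ := by ring


/-- pinching corollary, `ρ ≤ a · (I_a ⊗ Tr_A(ρ))` in the Loewner order. -/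
theorem pinching_corollary (a b : ℕ) (ha : 1 ≤ a) (hb : 1 ≤ b)
    (ρ : Matrix (Fin a × Fin b) (Fin a × Fin b) ℂ) (hρ : ρ.PosSemidef) :
    loewnerLE ρ ((a : ℂ) • ((1 : Matrix (Fin a) (Fin a) ℂ) ⊗ₖ ptraceA ρ)) := by
  classical
  open MatrixOrder in obtain ⟨M, hM⟩ := CStarAlgebra.nonneg_iff_eq_star_mul_self.mp hρ.nonneg
  rw [star_eq_conjTranspose] at hM
  have hσ : (ptraceA ρ).IsHermitian := by
    apply Matrix.IsHermitian.ext
    intro j j'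
    simp only [ptraceA, of_apply, star_sum]
    exact Finset.sum_congr rfl fun i _ => hρ.1.apply _ _
  refine Matrix.PosSemidef.of_dotProduct_mulVec_nonneg ?_ ?_
  · -- Hermitian
    apply Matrix.IsHermitian.ext
    intro p q
    simp only [Matrix.sub_apply, Matrix.smul_apply, kroneckerMap_apply, one_apply, smul_eq_mul, star_sub,
      star_mul', apply_ite (star : ℂ → ℂ), star_one, star_zero, star_natCast,
      hσ.apply, hρ.1.apply]
    rcases eq_or_ne p.1 q.1 with h | h
    · simp [h]
    · simp [h, Ne.symm h]
  · -- quadratic form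
    intro x
    rw [sub_mulVec, dotProduct_sub, smul_mulVec, dotProduct_smul, smul_eq_mul]
    set u : Fin a → Fin a → (Fin a × Fin b → ℂ) :=
      fun m i p => if p.1 = m then x (i, p.2) else 0 with hu_def
    have hu : ∀ m i m' i', star (u m i) ⬝ᵥ (ρ *ᵥ (u m' i')) =
        ∑ j, ∑ j', star (x (i,j)) * (ρ (m,j) (m',j') * x (i',j')) := by
      intro m i m' i'
      simp only [dotProduct, mulVec, hu_def, Pi.star_apply, Fintype.sum_prod_type,
        apply_ite (star : ℂ → ℂ), star_zero, ite_mul, zero_mul, mul_ite, mul_zero]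
      simp [Finset.sum_ite_eq', Finset.mul_sum, mul_assoc, dotProduct]
    have hA : star x ⬝ᵥ (((1 : Matrix (Fin a) (Fin a) ℂ) ⊗ₖ ptraceA ρ) *ᵥ x) =
        ∑ m, ∑ i, star (u m i) ⬝ᵥ (ρ *ᵥ (u m i)) := by
      have e1 : star x ⬝ᵥ (((1 : Matrix (Fin a) (Fin a) ℂ) ⊗ₖ ptraceA ρ) *ᵥ x) =
          ∑ i, ∑ j, ∑ m, ∑ j', star (x (i,j)) * (ρ (m,j) (m,j') * x (i,j')) := by
        simp only [dotProduct, mulVec, kroneckerMap_apply, one_apply, ptraceA, of_apply,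
          Pi.star_apply, Fintype.sum_prod_type, ite_mul, zero_mul, one_mul,
          Finset.sum_mul, Finset.mul_sum, mul_ite, mul_zero, Finset.sum_ite_irrel,
          Finset.sum_const_zero, Finset.sum_ite_eq, Finset.mem_univ, if_true]
        refine Finset.sum_congr rfl fun i _ => Finset.sum_congr rfl fun j _ => ?_
        rw [Finset.sum_comm]
      calc star x ⬝ᵥ (((1 : Matrix (Fin a) (Fin a) ℂ) ⊗ₖ ptraceA ρ) *ᵥ x)
          = ∑ i, ∑ j, ∑ m, ∑ j', star (x (i,j)) * (ρ (m,j) (m,j') * x (i,j')) := e1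
        _ = ∑ i, ∑ m, ∑ j, ∑ j', star (x (i,j)) * (ρ (m,j) (m,j') * x (i,j')) :=
            Finset.sum_congr rfl fun i _ => Finset.sum_comm
        _ = ∑ m, ∑ i, ∑ j, ∑ j', star (x (i,j)) * (ρ (m,j) (m,j') * x (i,j')) :=
            Finset.sum_comm
        _ = ∑ m, ∑ i, star (u m i) ⬝ᵥ (ρ *ᵥ (u m i)) := by simp [hu]
    have hB : star x ⬝ᵥ (ρ *ᵥ x) = ∑ i, ∑ i', star (u i i) ⬝ᵥ (ρ *ᵥ (u i' i')) := by
      have e2 : star x ⬝ᵥ (ρ *ᵥ x) =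
          ∑ i, ∑ i', ∑ j, ∑ j', star (x (i,j)) * (ρ (i,j) (i',j') * x (i',j')) := by
        simp only [dotProduct, mulVec, Pi.star_apply, Fintype.sum_prod_type,
          Finset.mul_sum, Finset.sum_mul]
        refine Finset.sum_congr rfl fun i _ => ?_
        rw [Finset.sum_comm]
      rw [e2]
      simp [hu]
    rw [hA, hB]
    have F : ∀ y z : (Fin a × Fin b) → ℂ, star y ⬝ᵥ (ρ *ᵥ z) =
        star (M *ᵥ y) ⬝ᵥ (M *ᵥ z) := by
      intro y z
      rw [hM, ← Matrix.mulVec_mulVec, Matrix.dotProduct_mulVec, ← Matrix.star_mulVec]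
    simp only [F]
    set w : Fin a → Fin a → (Fin a × Fin b → ℂ) := fun m i => M *ᵥ u m i with hw_def
    have hstep : ∑ i, star (w i i) ⬝ᵥ (w i i) ≤ ∑ m, ∑ i, star (w m i) ⬝ᵥ (w m i) := by
      rw [Finset.sum_comm]
      refine Finset.sum_le_sum fun i _ => ?_
      exact Finset.single_le_sum (f := fun m => star (w m i) ⬝ᵥ (w m i))
        (fun m _ => dotProduct_star_self_nonneg _) (Finset.mem_univ i)
    have ha0 : (0:ℂ) ≤ (a:ℂ) := by rw [Complex.nonneg_iff]; norm_num
    have hkey := key_cs (fun i => w i i)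
    rw [Fintype.card_fin] at hkey
    have h1 : (a:ℂ) * ∑ i, star (w i i) ⬝ᵥ (w i i) ≤
        (a:ℂ) * ∑ m, ∑ i, star (w m i) ⬝ᵥ (w m i) :=
      mul_le_mul_of_nonneg_left hstep ha0
    calc (0:ℂ) ≤ (a:ℂ) * (∑ i, star (w i i) ⬝ᵥ (w i i)) -
          ∑ i, ∑ i', star (w i i) ⬝ᵥ (w i' i') := hkey
      _ ≤ (a:ℂ) * (∑ m, ∑ i, star (w m i) ⬝ᵥ (w m i)) -
          ∑ i, ∑ i', star (w i i) ⬝ᵥ (w i' i') := sub_le_sub_right h1 _
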